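/- Let p be a prime and let H be an m × n matrix over GF(p) all of whose entries are 0 or 1. Suppose every column of H contains exactly d ≥ 2 ones, and the Tanner graph of H has girth at least g, where g is even and g ≥ 6. Then every nonzero vector x ∈ GF(p)^n with H·x = 0 has Hamming weight at least T(d,g). -/

import Mathlib

open scoped Classical

/-- The simple graph on the disjoint union `V ⊕ C` associated to a bipartite adjacency
relation between variable nodes `V` and constraint nodes `C`. -/
def bip {V C : Type*} (adj : V → C → Prop) : SimpleGraph (V ⊕ C) where
  Adj x y :=
    (∃ v c, x = Sum.inl v ∧ y = Sum.inr c ∧ adj v c) ∨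
    (∃ v c, x = Sum.inr c ∧ y = Sum.inl v ∧ adj v c)
  symm := by
    constructor
    rintro x y (⟨v, c, hx, hy, h⟩ | ⟨v, c, hx, hy, h⟩)
    · exact Or.inr ⟨v, c, hy, hx, h⟩
    · exact Or.inl ⟨v, c, hy, hx, h⟩
  loopless := by
    constructor
    rintro x (⟨v, c, hx, hy, h⟩ | ⟨v, c, hx, hy, h⟩) <;> subst hx <;> simp at hy

/-- The tree bound `T(d,g)` for `d ≥ 2` and even girth `g ≥ 6`:
`T(d,g) = 1 + d + d(d−1) + … + d(d−1)^{(g−6)/4}` when `g ≡ 2 (mod 4)`, and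
`T(d,g) = 1 + d + d(d−1) + … + d(d−1)^{(g−8)/4} + (d−1)^{(g−4)/4}` when `g ≡ 0 (mod 4)`. -/
def treeBound (d g : ℕ) : ℕ :=
  if g % 4 = 2 then
    1 + d * ∑ k ∈ Finset.range ((g - 6) / 4 + 1), (d - 1) ^ k
  else
    1 + d * ∑ k ∈ Finset.range ((g - 8) / 4 + 1), (d - 1) ^ k + (d - 1) ^ ((g - 4) / 4)


set_option linter.unusedSectionVars false
namespace TannerAux
open SimpleGraph Walk Finset

variable {V : Type*} [Fintype V] {G : SimpleGraph V}

/-- sigma-level injectivity of concat -/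
lemma sigma_concat_inj {v0 a a' b b' : V} {p : G.Walk v0 a} {p' : G.Walk v0 a'}
    {h : G.Adj a b} {h' : G.Adj a' b'}
    (heq : (⟨b, p.concat h⟩ : Σ w : V, G.Walk v0 w) = ⟨b', p'.concat h'⟩) :
    (⟨a, p⟩ : Σ w : V, G.Walk v0 w) = ⟨a', p'⟩ := by
  obtain hb : b = b' := congrArg Sigma.fst heq
  subst hb
  have h2 : p.concat h = p'.concat h' := by
    simpa using heq
  obtain ⟨hv, hcopy⟩ := Walk.concat_inj h2
  subst hv
  rw [Walk.copy_rfl_rfl] at hcopy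
  rw [hcopy]

/-- Uniqueness of short paths in a graph of girth ≥ g. -/
lemma path_unique {g : ℕ} [DecidableEq V]
    (hg : ∀ (a : V) (w : G.Walk a a), w.IsCycle → g ≤ w.length) :
    ∀ (N : ℕ) {u v : V} (p q : G.Walk u v), p.IsPath → q.IsPath →
      2 * (p.length + q.length) + p.length ≤ N → p.length + q.length < g → p = q := by
  intro N
  induction N using Nat.strong_induction_on with
  | _ N IH =>
  intro u v p q hp hq hN hlt
  cases p with
  | nil => exact (isPath_iff_eq_nil.mp hq).symm
  | @cons _ a _ h p' =>
    cases q with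
    | nil => exact isPath_iff_eq_nil.mp hp
    | @cons _ b _ h' q' =>
      obtain ⟨hp', hup'⟩ := (cons_isPath_iff h p').mp hp
      obtain ⟨hq', huq'⟩ := (cons_isPath_iff h' q').mp hq
      by_cases hav : a = v
      · subst hav
        have hp'nil : p' = Walk.nil := isPath_iff_eq_nil.mp hp'
        subst hp'nil
        by_cases hedge : s(u, a) ∈ (Walk.cons h' q').edges
        · rw [edges_cons] at hedge
          rcases List.mem_cons.mp hedge with heq | hmem
          · rw [Sym2.eq_iff] at heq
            rcases heq with ⟨-, rfl⟩ | ⟨rfl, hau⟩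
            · have : q' = Walk.nil := isPath_iff_eq_nil.mp hq'
              subst this; rfl
            · exact absurd hau.symm h.ne
          · exact absurd (Walk.fst_mem_support_of_mem_edges q' hmem) huq'
        · exfalso
          have hc : (Walk.cons h (Walk.cons h' q').reverse).IsCycle := by
            rw [cons_isCycle_iff]
            refine ⟨hq.reverse, ?_⟩
            rw [edges_reverse, List.mem_reverse]
            exact hedge
          have := hg _ _ hc
          simp only [length_cons, length_reverse] at this
          simp only [length_cons, length_nil] at hlt
          omega
      · by_cases hmem : a ∈ (Walk.cons h' q').support
        · set q₁ := (Walk.cons h' q').takeUntil a hmem with hq₁def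
          set q₂ := (Walk.cons h' q').dropUntil a hmem with hq₂def
          have hspec : q₁.append q₂ = Walk.cons h' q' := take_spec _ hmem
          have hlen : q₁.length + q₂.length = q'.length + 1 := by
            have := congrArg Walk.length hspec
            rwa [length_append, length_cons] at this
          have hq₁p : q₁.IsPath := hq.takeUntil hmem
          have hq₂p : q₂.IsPath := hq.dropUntil hmem
          have hq₁1 : 1 ≤ q₁.length := by
            by_contra hcon
            exact h.ne (eq_of_length_eq_zero (p := q₁) (by omega))
          have hq₂1 : 1 ≤ q₂.length := by
            by_contra hcon
            exact hav (eq_of_length_eq_zero (p := q₂) (by omega))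
          simp only [length_cons] at hN hlt
          have hM1 : 2 * (p'.length + q₂.length) + p'.length < N := by omega
          have hL1 : p'.length + q₂.length < g := by omega
          have h1 : p' = q₂ := IH _ hM1 p' q₂ hp' hq₂p le_rfl hL1
          have hM2 : 2 * ((Walk.cons h Walk.nil).length + q₁.length)
              + (Walk.cons h Walk.nil).length < N := by
            simp only [length_cons, length_nil]; omega
          have hL2 : (Walk.cons h Walk.nil).length + q₁.length < g := by
            simp only [length_cons, length_nil]; omega
          have h2 : Walk.cons h Walk.nil = q₁ :=
            IH _ hM2 _ q₁
              ((cons_isPath_iff h Walk.nil).mpr ⟨IsPath.nil, by simp [h.ne]⟩) hq₁p le_rfl hL2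
          rw [← hspec, ← h1, ← h2]
          simp
        · exfalso
          have hnew : (Walk.cons h.symm (Walk.cons h' q')).IsPath :=
            (cons_isPath_iff _ _).mpr ⟨hq, hmem⟩
          simp only [length_cons] at hN hlt
          have hM : 2 * (p'.length + (Walk.cons h.symm (Walk.cons h' q')).length)
              + p'.length < N := by simp only [length_cons]; omega
          have hL : p'.length + (Walk.cons h.symm (Walk.cons h' q')).length < g := by
            simp only [length_cons]; omega
          have h1 : p' = Walk.cons h.symm (Walk.cons h' q') := IH _ hM p' _ hp' hnew le_rfl hL
          apply hup'
          rw [h1]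
          simp


variable (S : Finset V)
variable (hii : ∀ v ∈ S, ∀ w, G.Adj v w → ∃ v', v' ∈ S ∧ v' ≠ v ∧ G.Adj w v')

noncomputable def mkChild (v0 : V) (σ : Σ w : V, G.Walk v0 w) (hσ : σ.1 ∈ S)
    (c : V) (hc : G.Adj σ.1 c) : Σ w : V, G.Walk v0 w :=
  ⟨(hii σ.1 hσ c hc).choose, (σ.2.concat hc).concat (hii σ.1 hσ c hc).choose_spec.2.2⟩

noncomputable def children (v0 : V) (σ : Σ w : V, G.Walk v0 w) :
    Finset (Σ w : V, G.Walk v0 w) :=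
  if hσ : σ.1 ∈ S then
    (Finset.univ.filter fun w => G.Adj σ.1 w ∧ w ∉ σ.2.support).attach.image
      (fun c => mkChild S hii v0 σ hσ c.1 ((Finset.mem_filter.mp c.2).2.1))
  else ∅

lemma children_spec {v0 : V} {σ τ : Σ w : V, G.Walk v0 w}
    (hτ : τ ∈ children S hii v0 σ) :
    σ.1 ∈ S ∧ τ.1 ∈ S ∧ τ.1 ≠ σ.1 ∧
      ∃ (c : V) (h1 : G.Adj σ.1 c) (h2 : G.Adj c τ.1), c ∉ σ.2.support ∧
        τ.2 = (σ.2.concat h1).concat h2 := by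
  rw [children] at hτ
  split_ifs at hτ with hσ
  · obtain ⟨c, hcmem, rfl⟩ := Finset.mem_image.mp hτ
    have hc := (Finset.mem_filter.mp c.2).2
    have hspec := (hii σ.1 hσ c.1 hc.1).choose_spec
    exact ⟨hσ, hspec.1, hspec.2.1, c.1, hc.1, hspec.2.2, hc.2, rfl⟩
  · simp at hτ

lemma children_parent {v0 : V} {σ σ' τ : Σ w : V, G.Walk v0 w}
    (h : τ ∈ children S hii v0 σ) (h' : τ ∈ children S hii v0 σ') : σ = σ' := by
  obtain ⟨-, -, -, c, h1, h2, -, hdec⟩ := children_spec S hii h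
  obtain ⟨-, -, -, c', h1', h2', -, hdec'⟩ := children_spec S hii h'
  have e1 : (⟨τ.1, (σ.2.concat h1).concat h2⟩ : Σ w : V, G.Walk v0 w)
      = ⟨τ.1, (σ'.2.concat h1').concat h2'⟩ :=
    (congrArg (Sigma.mk τ.1) hdec).symm.trans (congrArg (Sigma.mk τ.1) hdec')
  have e2 := sigma_concat_inj e1
  have e3 := sigma_concat_inj e2
  calc σ = ⟨σ.1, σ.2⟩ := by exact (Sigma.eta σ).symm
    _ = ⟨σ'.1, σ'.2⟩ := e3
    _ = σ' := Sigma.eta σ'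

section Girth
lemma concat_isPath_iff' {u v w : V} (p : G.Walk u v) (h : G.Adj v w) :
    (p.concat h).IsPath ↔ p.IsPath ∧ w ∉ p.support := by
  rw [← isPath_reverse_iff, reverse_concat, cons_isPath_iff, isPath_reverse_iff,
    support_reverse, List.mem_reverse]

variable {g : ℕ} (hg : ∀ (a : V) (w : G.Walk a a), w.IsCycle → g ≤ w.length)
include hg

lemma path_unique' :
    ∀ {u v : V} (p q : G.Walk u v), p.IsPath → q.IsPath →
      p.length + q.length < g → p = q := by
  intro u v p q hp hq hlt
  exact path_unique hg (2 * (p.length + q.length) + p.length) p q hp hq le_rfl hlt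

/-- If `w` is a neighbor of the endpoint of a short path `p` and lies on `p`, then
`p` ends with the edge into `w`. -/
lemma drop_eq_single {v0 v : V} {p : G.Walk v0 v} (hp : p.IsPath)
    (hlen : p.length + 2 ≤ g) {w : V} (hw : G.Adj v w) (hws : w ∈ p.support) :
    (⟨v, p⟩ : Σ z : V, G.Walk v0 z) = ⟨v, (p.takeUntil w hws).concat hw.symm⟩ := by
  have hr : p.dropUntil w hws = Walk.cons hw.symm Walk.nil := by
    apply path_unique' hg _ _ (hp.dropUntil hws)
    · exact (cons_isPath_iff _ _).mpr ⟨IsPath.nil, by simp [hw.ne']⟩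
    · have h1 := length_dropUntil_le p hws
      simp only [length_cons, length_nil]
      omega
  have hspec := take_spec p hws
  rw [hr] at hspec
  rw [← concat_eq_append] at hspec
  rw [hspec]

lemma neighbor_in_support_unique {v0 v : V} {p : G.Walk v0 v} (hp : p.IsPath)
    (hlen : p.length + 2 ≤ g) {w w' : V} (hw : G.Adj v w) (hw' : G.Adj v w')
    (hws : w ∈ p.support) (hws' : w' ∈ p.support) : w = w' := by
  have e1 := drop_eq_single hg hp hlen hw hws
  have e2 := drop_eq_single hg hp hlen hw' hws'
  have := sigma_concat_inj (e1.symm.trans e2)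
  exact congrArg Sigma.fst this

lemma step_isPath {v0 a b c : V} {p : G.Walk v0 a}
    (hp : p.IsPath) (h1 : G.Adj a c) (h2 : G.Adj c b) (hcs : c ∉ p.support) (hba : b ≠ a)
    (hl : p.length + 3 ≤ g) : ((p.concat h1).concat h2).IsPath := by
  have hq' : (p.concat h1).IsPath := (concat_isPath_iff' _ _).mpr ⟨hp, hcs⟩
  rw [concat_isPath_iff']
  refine ⟨hq', fun hmem => ?_⟩
  have hlen : (p.concat h1).length + 2 ≤ g := by rw [length_concat]; omega
  have e1 := drop_eq_single hg hq' hlen h2 hmem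
  have e2 : (⟨b, (p.concat h1).takeUntil b hmem⟩ : Σ z : V, G.Walk v0 z) = ⟨a, p⟩ :=
    sigma_concat_inj e1.symm
  exact hba (congrArg Sigma.fst e2)


omit hg in
lemma children_card_aux {v0 : V} {σ : Σ w : V, G.Walk v0 w} (hσ : σ.1 ∈ S) :
    (children S hii v0 σ).card
      = (Finset.univ.filter fun w => G.Adj σ.1 w ∧ w ∉ σ.2.support).card := by
  rw [children, dif_pos hσ]
  rw [Finset.card_image_of_injOn, Finset.card_attach]
  intro c _ c' _ heq
  have e1 := sigma_concat_inj (p := σ.2.concat ((Finset.mem_filter.mp c.2).2.1))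
    (p' := σ.2.concat ((Finset.mem_filter.mp c'.2).2.1)) heq
  exact Subtype.ext (congrArg Sigma.fst e1)

variable {d : ℕ}

lemma children_card_ge
    (hdeg : ∀ v ∈ S, d ≤ (Finset.univ.filter fun w => G.Adj v w).card)
    {v0 : V} {σ : Σ w : V, G.Walk v0 w}
    (hσS : σ.1 ∈ S) (hσp : σ.2.IsPath) (hl : σ.2.length + 2 ≤ g) :
    d - 1 ≤ (children S hii v0 σ).card := by
  rw [children_card_aux S hii hσS]
  have key := Finset.card_filter_add_card_filter_not
    (s := Finset.univ.filter fun w => G.Adj σ.1 w) (p := fun w => w ∉ σ.2.support)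
  have h1 : ((Finset.univ.filter fun w => G.Adj σ.1 w).filter fun w => w ∉ σ.2.support)
      = Finset.univ.filter fun w => G.Adj σ.1 w ∧ w ∉ σ.2.support := by
    rw [Finset.filter_filter]
  have h2 : ((Finset.univ.filter fun w => G.Adj σ.1 w).filter fun w => ¬ w ∉ σ.2.support).card
      ≤ 1 := by
    rw [Finset.card_le_one]
    intro a ha b hb
    simp only [Finset.mem_filter, Finset.mem_univ, true_and, not_not] at ha hb
    exact neighbor_in_support_unique hg hσp hl ha.1 hb.1 ha.2 hb.2
  have h3 := hdeg σ.1 hσS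
  rw [h1] at key
  omega

lemma children_card_root
    (hdeg : ∀ v ∈ S, d ≤ (Finset.univ.filter fun w => G.Adj v w).card)
    {v0 : V} (hv0 : v0 ∈ S) :
    d ≤ (children S hii v0 ⟨v0, Walk.nil⟩).card := by
  rw [children_card_aux S hii hv0]
  have h1 : (Finset.univ.filter fun w => G.Adj v0 w ∧ w ∉ (Walk.nil : G.Walk v0 v0).support)
      = Finset.univ.filter fun w => G.Adj v0 w := by
    apply Finset.filter_congr
    intro w _
    simp only [Walk.support_nil, List.mem_singleton, and_iff_left_iff_imp]
    exact fun h hw => h.ne' hw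
  rw [h1]
  exact hdeg v0 hv0

omit hg

noncomputable def iter (v0 : V) (σ1 : Σ w : V, G.Walk v0 w) :
    ℕ → Finset (Σ w : V, G.Walk v0 w)
  | 0 => {σ1}
  | (k+1) => (iter v0 σ1 k).biUnion (children S hii v0)

include hg

lemma iter_inv {v0 : V} {σ1 : Σ w : V, G.Walk v0 w}
    (hσ1S : σ1.1 ∈ S) (hσ1p : σ1.2.IsPath) {L0 : ℕ} (hσ1l : σ1.2.length = L0) :
    ∀ k, L0 + 2*k + 1 ≤ g → ∀ τ ∈ iter S hii v0 σ1 k,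
      τ.1 ∈ S ∧ τ.2.IsPath ∧ τ.2.length = L0 + 2*k := by
  intro k
  induction k with
  | zero =>
    intro _ τ hτ
    rw [iter, Finset.mem_singleton] at hτ
    subst hτ
    exact ⟨hσ1S, hσ1p, by omega⟩
  | succ k ih =>
    intro hk τ hτ
    rw [iter, Finset.mem_biUnion] at hτ
    obtain ⟨σ, hσ, hτc⟩ := hτ
    obtain ⟨hσS, hτS, hτne, c, h1, h2, hcs, hdec⟩ := children_spec S hii hτc
    obtain ⟨-, hσp, hσl⟩ := ih (by omega) σ hσ
    refine ⟨hτS, ?_, ?_⟩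
    · rw [hdec]
      exact step_isPath hg hσp h1 h2 hcs hτne (by omega)
    · rw [hdec, length_concat, length_concat, hσl]
      omega

lemma iter_card (hdeg : ∀ v ∈ S, d ≤ (Finset.univ.filter fun w => G.Adj v w).card)
    {v0 : V} {σ1 : Σ w : V, G.Walk v0 w}
    (hσ1S : σ1.1 ∈ S) (hσ1p : σ1.2.IsPath) {L0 : ℕ} (hσ1l : σ1.2.length = L0) :
    ∀ k, L0 + 2*k + 1 ≤ g →
      (d-1)^k ≤ (iter S hii v0 σ1 k).card := by
  intro k
  induction k with
  | zero => intro _; simp [iter]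
  | succ k ih =>
    intro hk
    rw [iter, Finset.card_biUnion]
    · have hih := ih (by omega)
      calc (d-1)^(k+1) = (d-1)^k * (d-1) := by ring
      _ ≤ (iter S hii v0 σ1 k).card * (d-1) := Nat.mul_le_mul_right _ hih
      _ = ∑ _σ ∈ iter S hii v0 σ1 k, (d-1) := by rw [Finset.sum_const, smul_eq_mul]
      _ ≤ ∑ σ ∈ iter S hii v0 σ1 k, (children S hii v0 σ).card := by
          apply Finset.sum_le_sum
          intro σ hσ
          obtain ⟨hσS, hσp, hσl⟩ := iter_inv S hii hg hσ1S hσ1p hσ1l k (by omega) σ hσ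
          exact children_card_ge S hii hg hdeg hσS hσp (by omega)
    · intro σ hσ σ' hσ' hne
      rw [Function.onFun, Finset.disjoint_left]
      intro τ hτ hτ'
      exact hne (children_parent S hii hτ hτ')

omit hg in
lemma getVert_concat_le {u v w : V} {p : G.Walk u v} (h : G.Adj v w) {i : ℕ}
    (hi : i ≤ p.length) : (p.concat h).getVert i = p.getVert i := by
  rw [concat_eq_append, getVert_append]
  split_ifs with h'
  · rfl
  · have : i = p.length := by omega
    subst this
    rw [Nat.sub_self, getVert_zero, getVert_length]

lemma iter_prefix {v0 : V} {σ1 : Σ w : V, G.Walk v0 w}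
    (hσ1S : σ1.1 ∈ S) (hσ1p : σ1.2.IsPath) {L0 : ℕ} (hσ1l : σ1.2.length = L0)
    (hL0 : 2 ≤ L0) :
    ∀ k, L0 + 2*k + 1 ≤ g → ∀ τ ∈ iter S hii v0 σ1 k,
      τ.2.getVert 1 = σ1.2.getVert 1 ∧ τ.2.getVert 2 = σ1.2.getVert 2 := by
  intro k
  induction k with
  | zero =>
    intro _ τ hτ
    rw [iter, Finset.mem_singleton] at hτ
    subst hτ
    exact ⟨rfl, rfl⟩
  | succ k ih =>
    intro hk τ hτ
    rw [iter, Finset.mem_biUnion] at hτ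
    obtain ⟨σ, hσ, hτc⟩ := hτ
    obtain ⟨hσS, hτS, hτne, c, h1, h2, hcs, hdec⟩ := children_spec S hii hτc
    obtain ⟨ih1, ih2⟩ := ih (by omega) σ hσ
    obtain ⟨-, -, hσl⟩ := iter_inv S hii hg hσ1S hσ1p hσ1l k (by omega) σ hσ
    have e1 : 1 ≤ σ.2.length := by omega
    have e2 : 2 ≤ σ.2.length := by omega
    constructor
    · rw [hdec, getVert_concat_le _ (by rw [length_concat]; omega),
        getVert_concat_le _ (by omega), ih1]
    · rw [hdec, getVert_concat_le _ (by rw [length_concat]; omega),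
        getVert_concat_le _ (by omega), ih2]

lemma strip_two {v0 t : V} {p q : G.Walk v0 t} (hp : p.IsPath) (hq : q.IsPath)
    (hv1 : p.getVert 1 = q.getVert 1) (hv2 : p.getVert 2 = q.getVert 2)
    (hpl : 2 ≤ p.length) (hql : 2 ≤ q.length)
    (hlen : (p.length - 2) + (q.length - 2) < g) : p = q := by
  obtain ⟨x, hx, p2, rfl⟩ := (Walk.not_nil_iff (p := p)).mp
    (by rw [nil_iff_length_eq]; omega)
  obtain ⟨y, hy, p3, rfl⟩ := (Walk.not_nil_iff (p := p2)).mp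
    (by rw [nil_iff_length_eq]; simp only [length_cons] at hpl; omega)
  obtain ⟨x', hx', q2, rfl⟩ := (Walk.not_nil_iff (p := q)).mp
    (by rw [nil_iff_length_eq]; omega)
  obtain ⟨y', hy', q3, rfl⟩ := (Walk.not_nil_iff (p := q2)).mp
    (by rw [nil_iff_length_eq]; simp only [length_cons] at hql; omega)
  simp only [getVert_cons_succ, getVert_zero] at hv1 hv2
  subst hv1
  subst hv2
  have h3 : p3 = q3 := by
    apply path_unique' hg _ _ (hp.of_cons.of_cons) (hq.of_cons.of_cons)
    simp only [length_cons] at hlen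
    omega
  rw [h3]

lemma fst_injOn {v0 : V} {σ1 : Σ w : V, G.Walk v0 w}
    (hσ1S : σ1.1 ∈ S) (hσ1p : σ1.2.IsPath) {L0 : ℕ} (hσ1l : σ1.2.length = L0)
    (k : ℕ) (hk : L0 + 2*k + 1 ≤ g) (hk2 : 2*(L0 + 2*k) < g) :
    Set.InjOn (Sigma.fst : (Σ w : V, G.Walk v0 w) → V) ↑(iter S hii v0 σ1 k) := by
  intro τ hτ τ' hτ' hfst
  obtain ⟨-, hp, hl⟩ := iter_inv S hii hg hσ1S hσ1p hσ1l k hk τ (by exact_mod_cast hτ)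
  obtain ⟨-, hp', hl'⟩ := iter_inv S hii hg hσ1S hσ1p hσ1l k hk τ' (by exact_mod_cast hτ')
  obtain ⟨w, p⟩ := τ
  obtain ⟨w', q⟩ := τ'
  have hww : w = w' := hfst
  subst hww
  have hlp : p.length = L0 + 2*k := hl
  have hlq : q.length = L0 + 2*k := hl'
  have : p = q := path_unique' hg p q hp hp' (by omega)
  rw [this]

lemma fst_injOn_top {v0 : V} {σ1 : Σ w : V, G.Walk v0 w}
    (hσ1S : σ1.1 ∈ S) (hσ1p : σ1.2.IsPath) (hσ1l : σ1.2.length = 2)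
    (k : ℕ) (hk : 2 + 2*k + 1 ≤ g) (hk4 : 4*k < g) :
    Set.InjOn (Sigma.fst : (Σ w : V, G.Walk v0 w) → V) ↑(iter S hii v0 σ1 k) := by
  intro τ hτ τ' hτ' hfst
  obtain ⟨-, hp, hl⟩ := iter_inv S hii hg hσ1S hσ1p hσ1l k hk τ (by exact_mod_cast hτ)
  obtain ⟨-, hp', hl'⟩ := iter_inv S hii hg hσ1S hσ1p hσ1l k hk τ' (by exact_mod_cast hτ')
  obtain ⟨g1, g2⟩ := iter_prefix S hii hg hσ1S hσ1p hσ1l (by omega) k hk τ (by exact_mod_cast hτ)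
  obtain ⟨g1', g2'⟩ := iter_prefix S hii hg hσ1S hσ1p hσ1l (by omega) k hk τ' (by exact_mod_cast hτ')
  obtain ⟨w, p⟩ := τ
  obtain ⟨w', q⟩ := τ'
  have hww : w = w' := hfst
  subst hww
  have hlp : p.length = 2 + 2*k := hl
  have hlq : q.length = 2 + 2*k := hl'
  have : p = q := strip_two hg hp hp' (g1.trans g1'.symm) (g2.trans g2'.symm)
    (by omega) (by omega) (by omega)
  rw [this]

lemma fst_disjoint {v0 : V} {σ1 σ1' : Σ w : V, G.Walk v0 w}
    (hσ1S : σ1.1 ∈ S) (hσ1p : σ1.2.IsPath) {L0 : ℕ} (hσ1l : σ1.2.length = L0)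
    (hσ1S' : σ1'.1 ∈ S) (hσ1p' : σ1'.2.IsPath) {L0' : ℕ} (hσ1l' : σ1'.2.length = L0')
    (k k' : ℕ) (hk : L0 + 2*k + 1 ≤ g) (hk' : L0' + 2*k' + 1 ≤ g)
    (hne : L0 + 2*k ≠ L0' + 2*k') (hsum : (L0 + 2*k) + (L0' + 2*k') < g) :
    Disjoint ((iter S hii v0 σ1 k).image Sigma.fst)
      ((iter S hii v0 σ1' k').image Sigma.fst) := by
  rw [Finset.disjoint_left]
  intro j hj hj'
  obtain ⟨τ, hτ, hfst⟩ := Finset.mem_image.mp hj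
  obtain ⟨τ', hτ', hfst'⟩ := Finset.mem_image.mp hj'
  obtain ⟨-, hp, hl⟩ := iter_inv S hii hg hσ1S hσ1p hσ1l k hk τ hτ
  obtain ⟨-, hp', hl'⟩ := iter_inv S hii hg hσ1S' hσ1p' hσ1l' k' hk' τ' hτ'
  obtain ⟨w, p⟩ := τ
  obtain ⟨w', q⟩ := τ'
  have hww : w = w' := hfst.trans hfst'.symm
  subst hww
  have hlp : p.length = L0 + 2*k := hl
  have hlq : q.length = L0' + 2*k' := hl'
  have : p = q := path_unique' hg p q hp hp' (by omega)
  rw [this] at hlp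
  omega

lemma levels_card (hdeg : ∀ v ∈ S, d ≤ (Finset.univ.filter fun w => G.Adj v w).card)
    {v0 : V} (hv0 : v0 ∈ S) :
    ∀ k, 2*(k+1) + 1 ≤ g →
      d * (d-1)^k ≤ (iter S hii v0 ⟨v0, Walk.nil⟩ (k+1)).card := by
  intro k
  induction k with
  | zero =>
    intro hk
    have h1 : iter S hii v0 ⟨v0, Walk.nil⟩ 1 = children S hii v0 ⟨v0, Walk.nil⟩ := by
      rw [iter, iter, Finset.singleton_biUnion]
    rw [h1, pow_zero, mul_one]
    exact children_card_root S hii hg hdeg hv0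
  | succ k ih =>
    intro hk
    have hih := ih (by omega)
    rw [iter, Finset.card_biUnion]
    · calc d * (d-1)^(k+1) = (d * (d-1)^k) * (d-1) := by ring
      _ ≤ (iter S hii v0 ⟨v0, Walk.nil⟩ (k+1)).card * (d-1) := Nat.mul_le_mul_right _ hih
      _ = ∑ _σ ∈ iter S hii v0 ⟨v0, Walk.nil⟩ (k+1), (d-1) := by
          rw [Finset.sum_const, smul_eq_mul]
      _ ≤ ∑ σ ∈ iter S hii v0 ⟨v0, Walk.nil⟩ (k+1), (children S hii v0 σ).card := by
          apply Finset.sum_le_sum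
          intro σ hσ
          obtain ⟨hσS, hσp, hσl⟩ := iter_inv S hii hg (σ1 := ⟨v0, Walk.nil⟩) hv0 Walk.IsPath.nil (L0 := 0) rfl (k+1)
            (by omega) σ hσ
          exact children_card_ge S hii hg hdeg hσS hσp (by omega)
    · intro σ hσ σ' hσ' hne
      rw [Function.onFun, Finset.disjoint_left]
      intro τ hτ hτ'
      exact hne (children_parent S hii hτ hτ')

include hii in
theorem abstract_bound {d : ℕ} (hd : 2 ≤ d) (hg6 : 6 ≤ g) (hge : g % 2 = 0)
    (hdeg : ∀ v ∈ S, d ≤ (Finset.univ.filter fun w => G.Adj v w).card)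
    {v0 : V} (hv0 : v0 ∈ S) :
    treeBound d g ≤ S.card := by
  classical
  have hrootp : (⟨v0, Walk.nil⟩ : Σ w : V, G.Walk v0 w).2.IsPath := Walk.IsPath.nil
  have hrootl : (⟨v0, Walk.nil⟩ : Σ w : V, G.Walk v0 w).2.length = 0 := rfl
  -- the generic full-levels estimate
  have main : ∀ L : ℕ, 1 ≤ L → 4*L + 2 ≤ g →
      1 + d * ∑ j ∈ Finset.range L, (d-1)^j
        ≤ ∑ k ∈ Finset.range (L+1),
            ((iter S hii v0 ⟨v0, Walk.nil⟩ k).image Sigma.fst).card := by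
    intro L hL1 hL
    rw [Finset.sum_range_succ']
    have h0 : ((iter S hii v0 ⟨v0, Walk.nil⟩ 0).image Sigma.fst).card = 1 := by
      rw [iter, Finset.image_singleton, Finset.card_singleton]
    rw [h0]
    rw [add_comm 1]
    apply Nat.add_le_add_right
    calc d * ∑ j ∈ Finset.range L, (d-1)^j
        = ∑ j ∈ Finset.range L, d * (d-1)^j := by rw [Finset.mul_sum]
      _ ≤ _ := by
          apply Finset.sum_le_sum
          intro k hk
          rw [Finset.mem_range] at hk
          have h1 := levels_card S hii hg hdeg hv0 k (by omega)
          have h2 : ((iter S hii v0 ⟨v0, Walk.nil⟩ (k+1)).image Sigma.fst).card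
              = (iter S hii v0 ⟨v0, Walk.nil⟩ (k+1)).card := by
            apply Finset.card_image_of_injOn
            exact fst_injOn S hii hg hv0 hrootp hrootl (k+1) (by omega) (by omega)
          omega
  -- all endpoint images are inside S
  have hsub : ∀ (σ1 : Σ w : V, G.Walk v0 w) (hσ1S : σ1.1 ∈ S) (hσ1p : σ1.2.IsPath)
      (L0 : ℕ) (hσ1l : σ1.2.length = L0) (k : ℕ), L0 + 2*k + 1 ≤ g →
      (iter S hii v0 σ1 k).image Sigma.fst ⊆ S := by
    intro σ1 hσ1S hσ1p L0 hσ1l k hk j hj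
    obtain ⟨τ, hτ, rfl⟩ := Finset.mem_image.mp hj
    exact (iter_inv S hii hg hσ1S hσ1p hσ1l k hk τ hτ).1
  by_cases hmod : g % 4 = 2
  · -- g ≡ 2 (mod 4)
    set L : ℕ := (g-6)/4 + 1 with hLdef
    have hL : 4*L + 2 ≤ g := by omega
    have hmain := main L (by omega) hL
    have hbig : ∑ k ∈ Finset.range (L+1),
        ((iter S hii v0 ⟨v0, Walk.nil⟩ k).image Sigma.fst).card ≤ S.card := by
      rw [← Finset.card_biUnion]
      · apply Finset.card_le_card
        intro j hj
        rw [Finset.mem_biUnion] at hj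
        obtain ⟨k, hk, hjk⟩ := hj
        rw [Finset.mem_range] at hk
        exact hsub _ hv0 hrootp 0 rfl k (by omega) hjk
      · intro k hk k' hk' hne
        rw [Finset.mem_coe, Finset.mem_range] at hk hk'
        exact fst_disjoint S hii hg hv0 hrootp hrootl hv0 hrootp hrootl k k'
          (by omega) (by omega) (by omega) (by omega)
    rw [treeBound, if_pos hmod]
    exact le_trans hmain hbig
  · -- g ≡ 0 (mod 4)
    have hmod0 : g % 4 = 0 := by omega
    set L : ℕ := (g-8)/4 + 1 with hLdef
    have hL : 4*L + 2 ≤ g := by omega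
    have hmain := main L (by omega) hL
    -- pick a level-1 node σ1
    have h1card := levels_card S hii hg hdeg hv0 0 (by omega)
    rw [pow_zero, mul_one] at h1card
    have h1pos : 0 < (iter S hii v0 ⟨v0, Walk.nil⟩ 1).card :=
      Nat.lt_of_lt_of_le (by omega) h1card
    obtain ⟨σ1, hσ1⟩ := Finset.card_pos.mp h1pos
    obtain ⟨hσ1S, hσ1p, hσ1l⟩ :=
      iter_inv S hii hg hv0 hrootp hrootl 1 (by omega) σ1 hσ1
    have hσ1l2 : σ1.2.length = 2 := by omega
    -- the branch set
    have hBcard : (d-1)^L ≤ (iter S hii v0 σ1 L).card :=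
      iter_card S hii hg hdeg hσ1S hσ1p hσ1l2 L (by omega)
    have hBimg : ((iter S hii v0 σ1 L).image Sigma.fst).card
        = (iter S hii v0 σ1 L).card := by
      apply Finset.card_image_of_injOn
      exact fst_injOn_top S hii hg hσ1S hσ1p hσ1l2 L (by omega) (by omega)
    -- disjointness of the union of full levels from the branch
    have hdisjtop : Disjoint
        ((Finset.range (L+1)).biUnion
          (fun k => (iter S hii v0 ⟨v0, Walk.nil⟩ k).image Sigma.fst))
        ((iter S hii v0 σ1 L).image Sigma.fst) := by
      rw [Finset.disjoint_biUnion_left]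
      intro k hk
      rw [Finset.mem_range] at hk
      exact fst_disjoint S hii hg hv0 hrootp hrootl hσ1S hσ1p hσ1l2 k L
        (by omega) (by omega) (by omega) (by omega)
    have hbig : ∑ k ∈ Finset.range (L+1),
        ((iter S hii v0 ⟨v0, Walk.nil⟩ k).image Sigma.fst).card
        + (d-1)^L ≤ S.card := by
      have hcb : ((Finset.range (L+1)).biUnion
          (fun k => (iter S hii v0 ⟨v0, Walk.nil⟩ k).image Sigma.fst)).card
          = ∑ k ∈ Finset.range (L+1),
            ((iter S hii v0 ⟨v0, Walk.nil⟩ k).image Sigma.fst).card := by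
        apply Finset.card_biUnion
        intro k hk k' hk' hne
        rw [Finset.mem_coe, Finset.mem_range] at hk hk'
        exact fst_disjoint S hii hg hv0 hrootp hrootl hv0 hrootp hrootl k k'
          (by omega) (by omega) (by omega) (by omega)
      calc ∑ k ∈ Finset.range (L+1),
            ((iter S hii v0 ⟨v0, Walk.nil⟩ k).image Sigma.fst).card + (d-1)^L
          ≤ ((Finset.range (L+1)).biUnion
              (fun k => (iter S hii v0 ⟨v0, Walk.nil⟩ k).image Sigma.fst)).card
            + ((iter S hii v0 σ1 L).image Sigma.fst).card := by
            rw [hcb, hBimg]; omega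
        _ = (((Finset.range (L+1)).biUnion
              (fun k => (iter S hii v0 ⟨v0, Walk.nil⟩ k).image Sigma.fst))
            ∪ (iter S hii v0 σ1 L).image Sigma.fst).card := by
            rw [Finset.card_union_of_disjoint hdisjtop]
        _ ≤ S.card := by
            apply Finset.card_le_card
            intro j hj
            rw [Finset.mem_union] at hj
            rcases hj with hj | hj
            · rw [Finset.mem_biUnion] at hj
              obtain ⟨k, hk, hjk⟩ := hj
              rw [Finset.mem_range] at hk
              exact hsub _ hv0 hrootp 0 rfl k (by omega) hjk
            · exact hsub σ1 hσ1S hσ1p 2 hσ1l2 L (by omega) hj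
    rw [treeBound, if_neg hmod]
    have hexp : (g-4)/4 = L := by omega
    rw [hexp, show (g-8)/4 + 1 = L from hLdef.symm]
    omega

end Girth

end TannerAux


theorem stmt_6 (p : ℕ) (hp : p.Prime) (m n d g : ℕ) (hd : 2 ≤ d)
    (hg6 : 6 ≤ g) (hge : Even g)
    (H : Matrix (Fin m) (Fin n) (ZMod p))
    -- all entries of H are 0 or 1
    (h01 : ∀ i j, H i j = 0 ∨ H i j = 1)
    -- every column of H contains exactly d ones
    (hcol : ∀ j : Fin n, Nat.card {i : Fin m // H i j = 1} = d)
    -- the Tanner graph of H has girth at least g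
    (hgirth : (g : ℕ∞) ≤ (bip fun (j : Fin n) (i : Fin m) => H i j = 1).egirth) :
    -- every nonzero x with H·x = 0 has Hamming weight at least T(d,g)
    ∀ x : Fin n → ZMod p, H.mulVec x = 0 → x ≠ 0 →
      treeBound d g ≤ Nat.card {j : Fin n // x j ≠ 0} := by
  intro x hx hx0
  classical
  set G := bip fun (j : Fin n) (i : Fin m) => H i j = 1 with hG
  have hadj1 : ∀ (j : Fin n) (i : Fin m), G.Adj (Sum.inl j) (Sum.inr i) ↔ H i j = 1 := by
    intro j i
    constructor
    · rintro (⟨v, c, hv, hc, h⟩ | ⟨v, c, hv, hc, h⟩)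
      · rw [Sum.inl.injEq] at hv
        rw [Sum.inr.injEq] at hc
        subst hv; subst hc; exact h
      · exact absurd hv (by simp)
    · intro h
      exact Or.inl ⟨j, i, rfl, rfl, h⟩
  have hadjr : ∀ (j : Fin n) (w), G.Adj (Sum.inl j) w → ∃ i, w = Sum.inr i ∧ H i j = 1 := by
    intro j w hw
    rcases hw with ⟨v, c, hv, hc, h⟩ | ⟨v, c, hv, hc, h⟩
    · rw [Sum.inl.injEq] at hv
      subst hv
      exact ⟨c, hc, h⟩
    · exact absurd hv (by simp)
  have hadjc : ∀ (i : Fin m) (w), G.Adj (Sum.inr i) w → ∃ j, w = Sum.inl j ∧ H i j = 1 := by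
    intro i w hw
    rcases hw with ⟨v, c, hv, hc, h⟩ | ⟨v, c, hv, hc, h⟩
    · exact absurd hv (by simp)
    · rw [Sum.inr.injEq] at hv
      subst hv
      exact ⟨v, hc, h⟩
  set S : Finset (Fin n ⊕ Fin m) := (Finset.univ.filter fun j => x j ≠ 0).image Sum.inl
    with hS
  have hcard : Nat.card {j : Fin n // x j ≠ 0} = S.card := by
    rw [Nat.card_eq_fintype_card, Fintype.card_subtype, hS,
      Finset.card_image_of_injective _ Sum.inl_injective]
  have hF2 : ∀ (i : Fin m) (j : Fin n), x j ≠ 0 → H i j = 1 →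
      ∃ j', x j' ≠ 0 ∧ j' ≠ j ∧ H i j' = 1 := by
    intro i j hxj hHij
    by_contra hcon
    push_neg at hcon
    have h0 : H.mulVec x i = 0 := congrFun hx i
    rw [Matrix.mulVec, dotProduct] at h0
    have hTj : Finset.univ.filter (fun j' => H i j' = 1 ∧ x j' ≠ 0) = {j} := by
      ext j'
      simp only [Finset.mem_filter, Finset.mem_univ, true_and, Finset.mem_singleton]
      constructor
      · rintro ⟨hH', hx'⟩
        by_contra hne
        exact hcon j' hx' hne hH'
      · rintro rfl
        exact ⟨hHij, hxj⟩
    have hvan : ∀ j' ∈ Finset.univ, j' ∉ Finset.univ.filter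
        (fun j' => H i j' = 1 ∧ x j' ≠ 0) → H i j' * x j' = 0 := by
      intro j' _ hj'
      simp only [Finset.mem_filter, Finset.mem_univ, true_and, not_and, not_not] at hj'
      rcases h01 i j' with h | h
      · rw [h, zero_mul]
      · rw [hj' h, mul_zero]
    have hsum : ∑ j' ∈ Finset.univ.filter (fun j' => H i j' = 1 ∧ x j' ≠ 0), x j'
        = ∑ j', H i j' * x j' := by
      rw [← Finset.sum_subset (Finset.subset_univ _) hvan]
      apply Finset.sum_congr rfl
      intro j' hj'
      rw [Finset.mem_filter] at hj'
      rw [hj'.2.1, one_mul]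
    have hT : ∑ j' ∈ Finset.univ.filter (fun j' => H i j' = 1 ∧ x j' ≠ 0), x j' = 0 :=
      hsum.trans h0
    rw [hTj, Finset.sum_singleton] at hT
    exact hxj hT
  have hii : ∀ v ∈ S, ∀ w, G.Adj v w → ∃ v', v' ∈ S ∧ v' ≠ v ∧ G.Adj w v' := by
    intro v hv w hw
    obtain ⟨j, hj, rfl⟩ := Finset.mem_image.mp hv
    rw [Finset.mem_filter] at hj
    obtain ⟨i, rfl, hHij⟩ := hadjr j w hw
    obtain ⟨j', hxj', hne, hH'⟩ := hF2 i j hj.2 hHij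
    refine ⟨Sum.inl j', ?_, ?_, ?_⟩
    · exact Finset.mem_image_of_mem _ (Finset.mem_filter.mpr ⟨Finset.mem_univ _, hxj'⟩)
    · simp only [ne_eq, Sum.inl.injEq]
      exact hne
    · exact ((hadj1 j' i).mpr hH').symm
  have hdeg : ∀ v ∈ S, d ≤ (Finset.univ.filter fun w => G.Adj v w).card := by
    intro v hv
    obtain ⟨j, hj, rfl⟩ := Finset.mem_image.mp hv
    have h1 : (Finset.univ.filter fun i : Fin m => H i j = 1).image (Sum.inr : Fin m → Fin n ⊕ Fin m)
        ⊆ Finset.univ.filter fun w => G.Adj (Sum.inl j) w := by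
      intro w hw
      obtain ⟨i, hi, rfl⟩ := Finset.mem_image.mp hw
      rw [Finset.mem_filter] at hi ⊢
      exact ⟨Finset.mem_univ _, (hadj1 j i).mpr hi.2⟩
    have h2 : ((Finset.univ.filter fun i : Fin m => H i j = 1).image (Sum.inr : Fin m → Fin n ⊕ Fin m)).card = d := by
      rw [Finset.card_image_of_injective _ (Sum.inr_injective (α := Fin n))]
      have := hcol j
      rw [Nat.card_eq_fintype_card, Fintype.card_subtype] at this
      exact this
    rw [← h2]
    exact Finset.card_le_card h1
  have hgir : ∀ (a : Fin n ⊕ Fin m) (w : G.Walk a a), w.IsCycle → g ≤ w.length := by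
    intro a w hw
    have := SimpleGraph.le_egirth.mp hgirth a w hw
    exact_mod_cast this
  obtain ⟨j0, hj0⟩ : ∃ j, x j ≠ 0 := Function.ne_iff.mp hx0
  have hv0 : (Sum.inl j0 : Fin n ⊕ Fin m) ∈ S :=
    Finset.mem_image_of_mem _ (Finset.mem_filter.mpr ⟨Finset.mem_univ _, hj0⟩)
  rw [hcard]
  exact TannerAux.abstract_bound S hii hgir hd hg6 (Nat.even_iff.mp hge) hdeg hv0
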